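/- arXiv:1403.6706 — 2 statements merged into one kernel-verified Lean document; each statement's English description precedes it below -/
import Mathlib

section
/- Let ρ(y) = sup_{u ∈ U} ( ⟨u, b + By⟩ − (1/2)⟨u, Mu⟩ ) with U = {u : Cu ≤ c} a nonempty polyhedron, M symmetric positive semidefinite. Then the Moreau envelope e_γ ρ with parameter γ > 0 is again a QS function with the same U, b, B, and modified matrix M̄ = M + γ B Bᵀ, i.e., e_γ ρ(y) = sup_{u ∈ U} ( ⟨u, b + By⟩ − (1/2)⟨u, (M + γBBᵀ)u⟩ ). -/
open Matrix

private lemma dot_symm {m : ℕ} (Q : Matrix (Fin m) (Fin m) ℝ) (hQ : Qᵀ = Q)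
    (a d : Fin m → ℝ) : a ⬝ᵥ Q.mulVec d = d ⬝ᵥ Q.mulVec a := by
  rw [Matrix.dotProduct_mulVec, ← Matrix.mulVec_transpose, hQ]
  exact dotProduct_comm _ _

private lemma g_expand {m : ℕ} (Q : Matrix (Fin m) (Fin m) ℝ) (hQ : Qᵀ = Q)
    (w a d : Fin m → ℝ) (t : ℝ) :
    (a + t • d) ⬝ᵥ w - (1/2) * ((a + t • d) ⬝ᵥ Q.mulVec (a + t • d)) =
      (a ⬝ᵥ w - (1/2) * (a ⬝ᵥ Q.mulVec a))
        + t * (d ⬝ᵥ w - d ⬝ᵥ Q.mulVec a) - t^2/2 * (d ⬝ᵥ Q.mulVec d) := by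
  have hsym := dot_symm Q hQ a d
  simp only [Matrix.mulVec_add, Matrix.mulVec_smul, add_dotProduct,
    dotProduct_add, smul_dotProduct, dotProduct_smul, smul_eq_mul]
  rw [hsym]
  ring

private lemma nonpos_of_forall_small (D q : ℝ) (hq : 0 ≤ q)
    (h : ∀ t : ℝ, 0 < t → t ≤ 1 → t * D ≤ t^2/2 * q) : D ≤ 0 := by
  by_contra hD
  push_neg at hD
  have hqpos : (0:ℝ) < q + 1 := by linarith
  set t := min 1 (D / (q+1)) with ht
  have ht1 : t ≤ 1 := min_le_left _ _
  have ht2 : t ≤ D/(q+1) := min_le_right _ _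
  have htpos : 0 < t := lt_min one_pos (div_pos hD hqpos)
  have hkey := h t htpos ht1
  have h6 : t * q ≤ D := by
    have : t * (q+1) ≤ D := by
      rw [← div_mul_cancel₀ D (ne_of_gt hqpos)]
      exact mul_le_mul_of_nonneg_right ht2 (le_of_lt hqpos)
    nlinarith
  nlinarith

private lemma key_identity {m n : ℕ} (γ : ℝ) (hγ : 0 < γ)
    (M : Matrix (Fin m) (Fin m) ℝ) (b : Fin m → ℝ) (B : Matrix (Fin m) (Fin n) ℝ)
    (y x : Fin n → ℝ) (u : Fin m → ℝ) :
    (1 / (2 * γ)) * ∑ i, (x i - y i) ^ 2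
      + (u ⬝ᵥ (b + B.mulVec x) - (1 / 2) * (u ⬝ᵥ M.mulVec u))
    = (1 / (2 * γ)) * ∑ i, (x i - y i + γ * Bᵀ.mulVec u i) ^ 2
      + (u ⬝ᵥ (b + B.mulVec y) - (1 / 2) * (u ⬝ᵥ (M + γ • (B * Bᵀ)).mulVec u)) := by
  set v := Bᵀ.mulVec u with hv
  have h1 : ∑ i, (x i - y i + γ * v i) ^ 2
      = ∑ i, (x i - y i) ^ 2 + 2 * γ * (∑ i, v i * (x i - y i)) + γ ^ 2 * (∑ i, v i * v i) := by
    rw [Finset.mul_sum, Finset.mul_sum, ← Finset.sum_add_distrib, ← Finset.sum_add_distrib]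
    exact Finset.sum_congr rfl fun i _ => by ring
  have h2 : ∑ i, v i * (x i - y i) = u ⬝ᵥ B.mulVec x - u ⬝ᵥ B.mulVec y := by
    have hvx : ∀ z : Fin n → ℝ, v ⬝ᵥ z = u ⬝ᵥ B.mulVec z := by
      intro z
      rw [Matrix.dotProduct_mulVec, hv, Matrix.mulVec_transpose]
    rw [← hvx x, ← hvx y]
    simp [dotProduct, mul_sub, Finset.sum_sub_distrib]
  have h3 : ∑ i, v i * v i = u ⬝ᵥ (B * Bᵀ).mulVec u := by
    rw [← Matrix.mulVec_mulVec, Matrix.dotProduct_mulVec, ← Matrix.mulVec_transpose, ← hv]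
    rfl
  have h4 : u ⬝ᵥ (M + γ • (B * Bᵀ)).mulVec u
      = u ⬝ᵥ M.mulVec u + γ * (u ⬝ᵥ (B * Bᵀ).mulVec u) := by
    rw [Matrix.add_mulVec, dotProduct_add, Matrix.smul_mulVec,
      dotProduct_smul, smul_eq_mul]
  rw [h1, h2, h4, h3, dotProduct_add, dotProduct_add]
  field_simp
  ring

/-- Moreau–Yosida smoothing of a PLQ penalty stays in the PLQ class: the
envelope has the same `U`, `b`, `B`, and modified matrix `M + γBBᵀ`. -/
theorem plq_moreau_envelope (m n ℓ : ℕ)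
    (C : Matrix (Fin ℓ) (Fin m) ℝ) (c : Fin ℓ → ℝ)
    (M : Matrix (Fin m) (Fin m) ℝ) (hM : M.PosSemidef)
    (b : Fin m → ℝ) (B : Matrix (Fin m) (Fin n) ℝ)
    (hU_ne : {u : Fin m → ℝ | ∀ i, C.mulVec u i ≤ c i}.Nonempty)
    (γ : ℝ) (hγ : 0 < γ) (y : Fin n → ℝ) :
    (⨅ x : Fin n → ℝ,
        (((1 / (2 * γ)) * ∑ i, (x i - y i) ^ 2 : ℝ) : EReal) +
          ⨆ u ∈ {u : Fin m → ℝ | ∀ i, C.mulVec u i ≤ c i},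
            ((u ⬝ᵥ (b + B.mulVec x) - (1 / 2) * (u ⬝ᵥ M.mulVec u) : ℝ) : EReal)) =
      ⨆ u ∈ {u : Fin m → ℝ | ∀ i, C.mulVec u i ≤ c i},
        ((u ⬝ᵥ (b + B.mulVec y) -
          (1 / 2) * (u ⬝ᵥ (M + γ • (B * Bᵀ)).mulVec u) : ℝ) : EReal) := by
  obtain ⟨u₀, hu₀⟩ := hU_ne
  -- basic algebraic facts
  have hMsymm : Mᵀ = M := by
    ext i j
    have := congrFun (congrFun hM.1 i) j
    simpa [Matrix.conjTranspose_apply] using this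
  have hQsymm : (M + γ • (B * Bᵀ))ᵀ = M + γ • (B * Bᵀ) := by
    rw [Matrix.transpose_add, Matrix.transpose_smul, Matrix.transpose_mul,
      Matrix.transpose_transpose, hMsymm]
  have hMdot : ∀ d : Fin m → ℝ, 0 ≤ d ⬝ᵥ M.mulVec d := fun d => by
    simpa using hM.dotProduct_mulVec_nonneg d
  have hBB : ∀ d : Fin m → ℝ, d ⬝ᵥ (B * Bᵀ).mulVec d
      = (Bᵀ.mulVec d) ⬝ᵥ (Bᵀ.mulVec d) := by
    intro d
    rw [← Matrix.mulVec_mulVec, Matrix.dotProduct_mulVec, ← Matrix.mulVec_transpose]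
  have hself : ∀ z : Fin n → ℝ, 0 ≤ z ⬝ᵥ z :=
    fun z => Finset.sum_nonneg fun i _ => mul_self_nonneg _
  have hQdot : ∀ d : Fin m → ℝ, d ⬝ᵥ (M + γ • (B * Bᵀ)).mulVec d
      = d ⬝ᵥ M.mulVec d + γ * ((Bᵀ.mulVec d) ⬝ᵥ (Bᵀ.mulVec d)) := by
    intro d
    rw [Matrix.add_mulVec, dotProduct_add, Matrix.smul_mulVec,
      dotProduct_smul, smul_eq_mul, hBB]
  have hQdotnn : ∀ d : Fin m → ℝ, 0 ≤ d ⬝ᵥ (M + γ • (B * Bᵀ)).mulVec d := by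
    intro d
    rw [hQdot d]
    have h1 := hMdot d
    have h2 := hself (Bᵀ.mulVec d)
    nlinarith
  -- the target concave quadratic
  obtain ⟨g, hgx⟩ : ∃ g : (Fin m → ℝ) → ℝ, ∀ v, g v
      = v ⬝ᵥ (b + B.mulVec y) - (1 / 2) * (v ⬝ᵥ (M + γ • (B * Bᵀ)).mulVec v) :=
    ⟨_, fun v => rfl⟩
  -- topological facts about U
  have hUclosed : IsClosed {u : Fin m → ℝ | ∀ i, C.mulVec u i ≤ c i} := by
    have hrw : {u : Fin m → ℝ | ∀ i, C.mulVec u i ≤ c i}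
        = ⋂ i, {u : Fin m → ℝ | C.mulVec u i ≤ c i} := by
      ext u; simp [Set.mem_iInter]
    rw [hrw]
    refine isClosed_iInter fun i => isClosed_le ?_ continuous_const
    exact (continuous_apply i).comp (continuous_const.matrix_mulVec continuous_id)
  have hUconvex : Convex ℝ {u : Fin m → ℝ | ∀ i, C.mulVec u i ≤ c i} := by
    intro p hp q hq a a' ha ha' haa
    simp only [Set.mem_setOf_eq] at hp hq ⊢
    intro i
    have hmv : C.mulVec (a • p + a' • q) i = a * C.mulVec p i + a' * C.mulVec q i := by
      rw [Matrix.mulVec_add, Matrix.mulVec_smul, Matrix.mulVec_smul]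
      simp [smul_eq_mul]
    rw [hmv]
    have h3 : a * c i + a' * c i = c i := by linear_combination c i * haa
    have h4 := mul_le_mul_of_nonneg_left (hp i) ha
    have h5 := mul_le_mul_of_nonneg_left (hq i) ha'
    linarith
  have hgcont : Continuous g := by
    have hfun : g = fun v =>
        v ⬝ᵥ (b + B.mulVec y) - (1 / 2) * (v ⬝ᵥ (M + γ • (B * Bᵀ)).mulVec v) :=
      funext hgx
    rw [hfun]
    refine Continuous.sub ?_ ?_
    · exact continuous_id.dotProduct continuous_const
    · exact continuous_const.mul
        (continuous_id.dotProduct (continuous_const.matrix_mulVec continuous_id))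
  -- THE CORE ANALYTIC FACT
  have hcore : ∀ σ : ℝ, (∀ u ∈ {u : Fin m → ℝ | ∀ i, C.mulVec u i ≤ c i}, g u ≤ σ) →
      ∃ xb : Fin n → ℝ, ∀ u ∈ {u : Fin m → ℝ | ∀ i, C.mulVec u i ≤ c i},
        (1 / (2 * γ)) * ∑ i, (xb i - y i) ^ 2
          + (u ⬝ᵥ (b + B.mulVec xb) - (1 / 2) * (u ⬝ᵥ M.mulVec u)) ≤ σ := by
    intro σ hσ
    set UR : ℕ → Set (Fin m → ℝ) := fun R =>
      {u : Fin m → ℝ | ∀ i, C.mulVec u i ≤ c i} ∩ Metric.closedBall 0 (‖u₀‖ + R) with hURdef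
    have hURmem0 : ∀ R, u₀ ∈ UR R := fun R =>
      ⟨hu₀, by
        rw [Metric.mem_closedBall, dist_zero_right]
        exact le_add_of_nonneg_right (Nat.cast_nonneg R)⟩
    have hURcpt : ∀ R, IsCompact (UR R) :=
      fun R => (isCompact_closedBall _ _).inter_left hUclosed
    have hURconv : ∀ R, Convex ℝ (UR R) :=
      fun R => hUconvex.inter (convex_closedBall _ _)
    choose uR huR hmaxR using
      fun R => (hURcpt R).exists_isMaxOn ⟨u₀, hURmem0 R⟩ hgcont.continuousOn
    -- Claim A : first-order optimality gives a uniform quadratic bound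
    have claimA : ∀ R, ∀ u ∈ UR R,
        γ/2 * ((Bᵀ.mulVec (u - uR R)) ⬝ᵥ (Bᵀ.mulVec (u - uR R))) + g u ≤ g (uR R) := by
      intro R u hu
      set a := uR R with hadef
      set d := u - a with hddef
      have hu_eq : a + d = u := by rw [hddef]; abel
      have hseg : ∀ t : ℝ, 0 < t → t ≤ 1 → a + t • d ∈ UR R := by
        intro t h0 h1
        have hmem := hURconv R (huR R) hu (by linarith : (0:ℝ) ≤ 1 - t) h0.le (by ring)
        have heq : (1 - t) • a + t • u = a + t • d := by
          rw [hddef, smul_sub]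
          ext j
          simp [smul_eq_mul]
          ring
        rwa [heq] at hmem
      have hexp := fun t : ℝ =>
        g_expand (M + γ • (B * Bᵀ)) hQsymm (b + B.mulVec y) a d t
      have hD : d ⬝ᵥ (b + B.mulVec y) - d ⬝ᵥ (M + γ • (B * Bᵀ)).mulVec a ≤ 0 := by
        refine nonpos_of_forall_small _ _ (hQdotnn d) ?_
        intro t h0 h1
        have hle : g (a + t • d) ≤ g a := hmaxR R (hseg t h0 h1)
        rw [hgx (a + t • d), hgx a] at hle
        have := hexp t
        linarith
      have hgu : g u = g a + 1 * (d ⬝ᵥ (b + B.mulVec y) - d ⬝ᵥ (M + γ • (B * Bᵀ)).mulVec a)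
          - 1^2/2 * (d ⬝ᵥ (M + γ • (B * Bᵀ)).mulVec d) := by
        have := hexp 1
        rw [one_smul, hu_eq] at this
        rw [hgx u, hgx a]
        exact this
      have hqd := hQdot d
      have hMd := hMdot d
      rw [hgu]
      nlinarith
    -- bounded sequence of "slopes"
    set v : ℕ → (Fin n → ℝ) := fun R => Bᵀ.mulVec (uR R) with hvdef
    set v0 : Fin n → ℝ := Bᵀ.mulVec u₀ with hv0def
    set K : ℝ := 2/γ * (σ - g u₀) with hKdef
    have hσ0 := hσ u₀ hu₀
    have hvball : ∀ R, v R ∈ Metric.closedBall v0 (Real.sqrt K) := by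
      intro R
      have hA := claimA R u₀ (hURmem0 R)
      have hB := hσ (uR R) (huR R).1
      have hsq : (Bᵀ.mulVec (u₀ - uR R)) ⬝ᵥ (Bᵀ.mulVec (u₀ - uR R)) ≤ K := by
        have hstep : γ/2 * ((Bᵀ.mulVec (u₀ - uR R)) ⬝ᵥ (Bᵀ.mulVec (u₀ - uR R)))
            ≤ σ - g u₀ := by linarith
        rw [hKdef]
        have h2γ : (0:ℝ) < 2/γ := by positivity
        calc (Bᵀ.mulVec (u₀ - uR R)) ⬝ᵥ (Bᵀ.mulVec (u₀ - uR R))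
            = 2/γ * (γ/2 * ((Bᵀ.mulVec (u₀ - uR R)) ⬝ᵥ (Bᵀ.mulVec (u₀ - uR R)))) := by
              field_simp
          _ ≤ 2/γ * (σ - g u₀) := mul_le_mul_of_nonneg_left hstep h2γ.le
      have hvc : ∀ j, Bᵀ.mulVec (u₀ - uR R) j = v0 j - v R j := by
        intro j
        rw [Matrix.mulVec_sub]
        rfl
      have hsum : ∑ j, (v0 j - v R j) * (v0 j - v R j) ≤ K := by
        have heq : (Bᵀ.mulVec (u₀ - uR R)) ⬝ᵥ (Bᵀ.mulVec (u₀ - uR R))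
            = ∑ j, (v0 j - v R j) * (v0 j - v R j) :=
          Finset.sum_congr rfl fun j _ => by rw [hvc j]
        rw [← heq]
        exact hsq
      rw [Metric.mem_closedBall, dist_eq_norm]
      rw [pi_norm_le_iff_of_nonneg (Real.sqrt_nonneg _)]
      intro i
      have h0 : (v0 i - v R i) * (v0 i - v R i) ≤ ∑ j, (v0 j - v R j) * (v0 j - v R j) :=
        Finset.single_le_sum (f := fun j => (v0 j - v R j) * (v0 j - v R j)) (fun j _ => mul_self_nonneg _) (Finset.mem_univ i)
      have hcoord : (v R i - v0 i)^2 ≤ K := by nlinarith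
      rw [Pi.sub_apply, Real.norm_eq_abs, ← Real.sqrt_sq_eq_abs]
      exact Real.sqrt_le_sqrt hcoord
    obtain ⟨vb, _, φ, hφ, hconv⟩ :=
      (isCompact_closedBall v0 (Real.sqrt K)).tendsto_subseq hvball
    refine ⟨fun i => y i - γ * vb i, ?_⟩
    intro u hu
    have hlim : γ/2 * (∑ i, (Bᵀ.mulVec u i - vb i)^2) + g u ≤ σ := by
      have hcont2 : Continuous fun z : Fin n → ℝ =>
          γ/2 * (∑ i, (Bᵀ.mulVec u i - z i)^2) + g u := by
        refine Continuous.add ?_ continuous_const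
        refine continuous_const.mul ?_
        exact continuous_finset_sum _ fun i _ =>
          (continuous_const.sub (continuous_apply i)).pow 2
      refine le_of_tendsto ((hcont2.tendsto vb).comp hconv) ?_
      filter_upwards [Filter.eventually_ge_atTop ⌈‖u‖⌉₊] with k hk
      have hφk : (⌈‖u‖⌉₊ : ℕ) ≤ φ k := le_trans hk hφ.le_apply
      have hmem : u ∈ UR (φ k) := by
        refine ⟨hu, ?_⟩
        rw [Metric.mem_closedBall, dist_zero_right]
        have h1 : ‖u‖ ≤ (⌈‖u‖⌉₊ : ℝ) := Nat.le_ceil _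
        have h2 : ((⌈‖u‖⌉₊ : ℕ) : ℝ) ≤ (φ k : ℝ) := Nat.cast_le.2 hφk
        linarith [norm_nonneg u₀]
      have hA := claimA (φ k) u hmem
      have hB := hσ (uR (φ k)) (huR (φ k)).1
      have hdd : (Bᵀ.mulVec (u - uR (φ k))) ⬝ᵥ (Bᵀ.mulVec (u - uR (φ k)))
          = ∑ i, (Bᵀ.mulVec u i - v (φ k) i)^2 := by
        refine Finset.sum_congr rfl fun i _ => ?_
        rw [Matrix.mulVec_sub]
        have : (Bᵀ.mulVec u - Bᵀ.mulVec (uR (φ k))) i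
            = Bᵀ.mulVec u i - v (φ k) i := rfl
        rw [this]
        ring
      show γ/2 * (∑ i, (Bᵀ.mulVec u i - v (φ k) i)^2) + g u ≤ σ
      rw [← hdd]
      linarith
    have hkey := key_identity γ hγ M b B y (fun i => y i - γ * vb i) u
    rw [hkey]
    have hsum2 : ∑ i, ((fun i => y i - γ * vb i) i - y i + γ * Bᵀ.mulVec u i)^2
        = γ^2 * ∑ i, (Bᵀ.mulVec u i - vb i)^2 := by
      rw [Finset.mul_sum]
      exact Finset.sum_congr rfl fun i _ => by ring
    rw [hsum2]
    have heq2 : 1/(2*γ) * (γ^2 * ∑ i, (Bᵀ.mulVec u i - vb i)^2)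
        = γ/2 * ∑ i, (Bᵀ.mulVec u i - vb i)^2 := by
      field_simp
    rw [← hgx u]
    linarith
  -- now the EReal bookkeeping
  refine le_antisymm ?hle ?hge
  case hge =>
    -- sup of the smoothed penalty ≤ the Moreau envelope (weak duality)
    refine le_iInf fun x => ?_
    refine iSup₂_le fun u hu => ?_
    have hnn : g u ≤ (1 / (2 * γ)) * ∑ i, (x i - y i) ^ 2
        + (u ⬝ᵥ (b + B.mulVec x) - (1 / 2) * (u ⬝ᵥ M.mulVec u)) := by
      rw [key_identity γ hγ M b B y x u, hgx u]
      have hpos : 0 ≤ (1 / (2 * γ)) * ∑ i, (x i - y i + γ * Bᵀ.mulVec u i) ^ 2 := by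
        have h1 : (0:ℝ) ≤ 1 / (2*γ) := by positivity
        have h2 : (0:ℝ) ≤ ∑ i, (x i - y i + γ * Bᵀ.mulVec u i) ^ 2 :=
          Finset.sum_nonneg fun i _ => sq_nonneg _
        positivity
      linarith
    rw [← hgx u]
    calc ((g u : ℝ) : EReal)
        ≤ (((1 / (2 * γ)) * ∑ i, (x i - y i) ^ 2
            + (u ⬝ᵥ (b + B.mulVec x) - (1 / 2) * (u ⬝ᵥ M.mulVec u)) : ℝ) : EReal) :=
          EReal.coe_le_coe_iff.2 hnn
      _ = (((1 / (2 * γ)) * ∑ i, (x i - y i) ^ 2 : ℝ) : EReal)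
            + ((u ⬝ᵥ (b + B.mulVec x) - (1 / 2) * (u ⬝ᵥ M.mulVec u) : ℝ) : EReal) :=
          EReal.coe_add _ _
      _ ≤ (((1 / (2 * γ)) * ∑ i, (x i - y i) ^ 2 : ℝ) : EReal)
            + ⨆ u ∈ {u : Fin m → ℝ | ∀ i, C.mulVec u i ≤ c i},
              ((u ⬝ᵥ (b + B.mulVec x) - (1 / 2) * (u ⬝ᵥ M.mulVec u) : ℝ) : EReal) := by
          exact add_le_add_right (le_biSup (fun u : Fin m → ℝ =>
            ((u ⬝ᵥ (b + B.mulVec x) - (1 / 2) * (u ⬝ᵥ M.mulVec u) : ℝ) : EReal)) hu) _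
  case hle =>
    by_cases htop : (⨆ u ∈ {u : Fin m → ℝ | ∀ i, C.mulVec u i ≤ c i},
        ((u ⬝ᵥ (b + B.mulVec y) -
          (1 / 2) * (u ⬝ᵥ (M + γ • (B * Bᵀ)).mulVec u) : ℝ) : EReal)) = ⊤
    · rw [htop]; exact le_top
    · have hbot : (⨆ u ∈ {u : Fin m → ℝ | ∀ i, C.mulVec u i ≤ c i},
          ((u ⬝ᵥ (b + B.mulVec y) -
            (1 / 2) * (u ⬝ᵥ (M + γ • (B * Bᵀ)).mulVec u) : ℝ) : EReal)) ≠ ⊥ := by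
        intro h
        have h0 : ((g u₀ : ℝ) : EReal) ≤ ⨆ u ∈ {u : Fin m → ℝ | ∀ i, C.mulVec u i ≤ c i},
            ((u ⬝ᵥ (b + B.mulVec y) -
              (1 / 2) * (u ⬝ᵥ (M + γ • (B * Bᵀ)).mulVec u) : ℝ) : EReal) := by
          rw [hgx u₀]
          exact le_biSup (fun u : Fin m → ℝ => ((u ⬝ᵥ (b + B.mulVec y) -
            (1 / 2) * (u ⬝ᵥ (M + γ • (B * Bᵀ)).mulVec u) : ℝ) : EReal)) hu₀
        rw [h] at h0
        exact EReal.coe_ne_bot _ (le_bot_iff.1 h0)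
      set S : EReal := ⨆ u ∈ {u : Fin m → ℝ | ∀ i, C.mulVec u i ≤ c i},
          ((u ⬝ᵥ (b + B.mulVec y) -
            (1 / 2) * (u ⬝ᵥ (M + γ • (B * Bᵀ)).mulVec u) : ℝ) : EReal) with hSdef
      have hcoe : ((S.toReal : ℝ) : EReal) = S := EReal.coe_toReal htop hbot
      have hσS : ∀ u ∈ {u : Fin m → ℝ | ∀ i, C.mulVec u i ≤ c i}, g u ≤ S.toReal := by
        intro u hu
        have h0 : ((g u : ℝ) : EReal) ≤ S := by
          rw [hgx u, hSdef]
          exact le_biSup (fun u : Fin m → ℝ => ((u ⬝ᵥ (b + B.mulVec y) -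
            (1 / 2) * (u ⬝ᵥ (M + γ • (B * Bᵀ)).mulVec u) : ℝ) : EReal)) hu
        rw [← hcoe] at h0
        exact EReal.coe_le_coe_iff.1 h0
      obtain ⟨xb, hxb⟩ := hcore S.toReal hσS
      refine iInf_le_of_le xb ?_
      have hsup : (⨆ u ∈ {u : Fin m → ℝ | ∀ i, C.mulVec u i ≤ c i},
          ((u ⬝ᵥ (b + B.mulVec xb) - (1 / 2) * (u ⬝ᵥ M.mulVec u) : ℝ) : EReal))
          ≤ ((S.toReal - (1 / (2 * γ)) * ∑ i, (xb i - y i) ^ 2 : ℝ) : EReal) := by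
        refine iSup₂_le fun u hu => ?_
        refine EReal.coe_le_coe_iff.2 ?_
        have := hxb u hu
        linarith
      calc (((1 / (2 * γ)) * ∑ i, (xb i - y i) ^ 2 : ℝ) : EReal)
            + ⨆ u ∈ {u : Fin m → ℝ | ∀ i, C.mulVec u i ≤ c i},
              ((u ⬝ᵥ (b + B.mulVec xb) - (1 / 2) * (u ⬝ᵥ M.mulVec u) : ℝ) : EReal)
          ≤ (((1 / (2 * γ)) * ∑ i, (xb i - y i) ^ 2 : ℝ) : EReal)
            + ((S.toReal - (1 / (2 * γ)) * ∑ i, (xb i - y i) ^ 2 : ℝ) : EReal) :=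
            add_le_add_right hsup _
        _ = ((S.toReal : ℝ) : EReal) := by
            rw [← EReal.coe_add]
            norm_num
        _ = S := hcoe
end

section
/- The quantile Huber function with parameters τ ∈ (0,1) and γ > 0, defined as the Moreau envelope of the quantile loss ρ_τ(r) = τ max(r,0) + (1−τ) max(−r,0), equals: (1−τ)|r| − γ(1−τ)²/2 for r ≤ −γ(1−τ); r²/(2γ) for −γ(1−τ) ≤ r ≤ γτ; and τ|r| − γτ²/2 for r ≥ γτ. -/
lemma ciInf_eq_of_min {f : ℝ → ℝ} {V : ℝ} (x₀ : ℝ) (h0 : f x₀ = V)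
    (hb : ∀ x, V ≤ f x) : (⨅ x, f x) = V :=
  le_antisymm (h0 ▸ ciInf_le ⟨V, by rintro _ ⟨x, rfl⟩; exact hb x⟩ x₀) (le_ciInf hb)

/-- The quantile Huber function (`τ ∈ (0,1)`, `γ > 0`), i.e. the Moreau
envelope of the quantile loss, is given piecewise as stated. -/
theorem quantile_huber_formula (τ γ : ℝ) (hτ : τ ∈ Set.Ioo (0 : ℝ) 1) (hγ : 0 < γ)
    (r : ℝ) :
    (⨅ x : ℝ, (1 / (2 * γ)) * (x - r) ^ 2 + (τ * max x 0 + (1 - τ) * max (-x) 0)) =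
      if r ≤ -γ * (1 - τ) then (1 - τ) * |r| - γ * (1 - τ) ^ 2 / 2
      else if r ≤ γ * τ then r ^ 2 / (2 * γ)
      else τ * |r| - γ * τ ^ 2 / 2 := by
  obtain ⟨hτ0, hτ1⟩ := hτ
  have hγ' : (0:ℝ) < 2 * γ := by linarith
  split_ifs with h1 h2
  · -- r ≤ -γ(1-τ)
    have hr0 : r ≤ 0 := by nlinarith
    rw [abs_of_nonpos hr0]
    apply ciInf_eq_of_min (r + γ * (1 - τ))
    · have hx0 : r + γ * (1 - τ) ≤ 0 := by linarith
      rw [max_eq_right hx0, max_eq_left (by linarith : (0:ℝ) ≤ -(r + γ * (1 - τ)))]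
      field_simp
      ring
    · intro x
      rcases le_total x 0 with hx | hx
      · rw [max_eq_right hx, max_eq_left (by linarith : (0:ℝ) ≤ -x)]
        rw [← sub_nonneg]
        have key : (0:ℝ) ≤ (x - r - γ * (1 - τ))^2 := sq_nonneg _
        have h2 : (0:ℝ) ≤ ((x - r)^2 + (2*γ) * ((1-τ)*(-x)) - ((1-τ)*(-r) - γ*(1-τ)^2/2) * (2*γ)) := by nlinarith
        have e : 1 / (2 * γ) * (x - r) ^ 2 + (τ * 0 + (1 - τ) * -x) - ((1 - τ) * -r - γ * (1 - τ) ^ 2 / 2)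
            = ((x - r)^2 + (2*γ) * ((1-τ)*(-x)) - ((1-τ)*(-r) - γ*(1-τ)^2/2) * (2*γ)) / (2*γ) := by
          field_simp; ring
        rw [e]
        positivity
      · rw [max_eq_left hx, max_eq_right (by linarith : -x ≤ (0:ℝ))]
        rw [← sub_nonneg]
        have key : (0:ℝ) ≤ (x - r - γ * (1 - τ))^2 := sq_nonneg _
        have hgx : (0:ℝ) ≤ γ * x := by positivity
        have h2 : (0:ℝ) ≤ ((x - r)^2 + (2*γ) * (τ*x) - ((1-τ)*(-r) - γ*(1-τ)^2/2) * (2*γ)) := by nlinarith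
        have e : 1 / (2 * γ) * (x - r) ^ 2 + (τ * x + (1 - τ) * 0) - ((1 - τ) * -r - γ * (1 - τ) ^ 2 / 2)
            = ((x - r)^2 + (2*γ) * (τ*x) - ((1-τ)*(-r) - γ*(1-τ)^2/2) * (2*γ)) / (2*γ) := by
          field_simp; ring
        rw [e]
        positivity
  · -- middle
    apply ciInf_eq_of_min 0
    · simp only [neg_zero, max_self, mul_zero, add_zero, zero_sub, neg_sq]
      field_simp
    · intro x
      push_neg at h1
      rcases le_total x 0 with hx | hx
      · rw [max_eq_right hx, max_eq_left (by linarith : (0:ℝ) ≤ -x)]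
        rw [← sub_nonneg]
        have key : (0:ℝ) ≤ x * (x - 2*r - 2*γ*(1-τ)) := by nlinarith
        have h2 : (0:ℝ) ≤ ((x - r)^2 + (2*γ) * ((1-τ)*(-x)) - r^2) := by nlinarith
        have e : 1 / (2 * γ) * (x - r) ^ 2 + (τ * 0 + (1 - τ) * -x) - r ^ 2 / (2 * γ)
            = ((x - r)^2 + (2*γ) * ((1-τ)*(-x)) - r^2) / (2*γ) := by field_simp; ring
        rw [e]; positivity
      · rw [max_eq_left hx, max_eq_right (by linarith : -x ≤ (0:ℝ))]
        rw [← sub_nonneg]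
        have key : (0:ℝ) ≤ x * (x - 2*r + 2*γ*τ) := by nlinarith
        have h2 : (0:ℝ) ≤ ((x - r)^2 + (2*γ) * (τ*x) - r^2) := by nlinarith
        have e : 1 / (2 * γ) * (x - r) ^ 2 + (τ * x + (1 - τ) * 0) - r ^ 2 / (2 * γ)
            = ((x - r)^2 + (2*γ) * (τ*x) - r^2) / (2*γ) := by field_simp; ring
        rw [e]; positivity
  · -- r > γτ
    push_neg at h1 h2
    have hr0 : 0 ≤ r := by nlinarith
    rw [abs_of_nonneg hr0]
    apply ciInf_eq_of_min (r - γ * τ)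
    · have hx0 : (0:ℝ) ≤ r - γ * τ := by linarith
      rw [max_eq_left hx0, max_eq_right (by linarith : -(r - γ*τ) ≤ (0:ℝ))]
      field_simp
      ring
    · intro x
      rcases le_total x 0 with hx | hx
      · rw [max_eq_right hx, max_eq_left (by linarith : (0:ℝ) ≤ -x)]
        rw [← sub_nonneg]
        have key : (0:ℝ) ≤ (x - r + γ * τ)^2 := sq_nonneg _
        have hgx : (0:ℝ) ≤ γ * (-x) := mul_nonneg hγ.le (by linarith)
        have h2 : (0:ℝ) ≤ ((x - r)^2 + (2*γ) * ((1-τ)*(-x)) - (τ*r - γ*τ^2/2) * (2*γ)) := by nlinarith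
        have e : 1 / (2 * γ) * (x - r) ^ 2 + (τ * 0 + (1 - τ) * -x) - (τ * r - γ * τ ^ 2 / 2)
            = ((x - r)^2 + (2*γ) * ((1-τ)*(-x)) - (τ*r - γ*τ^2/2) * (2*γ)) / (2*γ) := by
          field_simp; ring
        rw [e]; positivity
      · rw [max_eq_left hx, max_eq_right (by linarith : -x ≤ (0:ℝ))]
        rw [← sub_nonneg]
        have key : (0:ℝ) ≤ (x - r + γ * τ)^2 := sq_nonneg _
        have h2 : (0:ℝ) ≤ ((x - r)^2 + (2*γ) * (τ*x) - (τ*r - γ*τ^2/2) * (2*γ)) := by nlinarith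
        have e : 1 / (2 * γ) * (x - r) ^ 2 + (τ * x + (1 - τ) * 0) - (τ * r - γ * τ ^ 2 / 2)
            = ((x - r)^2 + (2*γ) * (τ*x) - (τ*r - γ*τ^2/2) * (2*γ)) / (2*γ) := by
          field_simp; ring
        rw [e]; positivity
end
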